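/- Let τ > 0, Λ > 0, and suppose the mean value ⟨1/M_S^per⟩ := (1/τ)∫_0^τ (1/M_S^per(t)) dt satisfies ⟨1/M_S^per⟩ < eβγ/N_F. Then every solution of the τ-periodic SIT system with nonnegative initial data converges to (0,0): if M, F : [0,∞) → ℝ are continuously differentiable, nonnegative, and satisfy M'(t) = rρ·(F(t)M(t)/(M(t)+γM_S^per(t)))·e^{−β(M(t)+F(t))} − μ_M M(t) and F'(t) = (1−r)ρ·(F(t)M(t)/(M(t)+γM_S^per(t)))·e^{−β(M(t)+F(t))} − μ_F F(t) for all t ≥ 0, then F((n+1)τ) ≤ exp((((1−r)ρ/(eβγ))·⟨1/M_S^per⟩ − μ_F)·τ)·F(nτ) for every n ∈ ℕ, and M(t) → 0 and F(t) → 0 as t → +∞. -/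

import Mathlib

open MeasureTheory intervalIntegral Filter

/-- x e^{-βx} ≤ 1/(eβ) -/
lemma aux_xexp {β x : ℝ} (hβ : 0 < β) (hx : 0 ≤ x) :
    x * Real.exp (-(β * x)) ≤ 1 / (Real.exp 1 * β) := by
  have he1 : (0:ℝ) < Real.exp 1 := Real.exp_pos _
  have h1 : Real.exp 1 * (β * x) ≤ Real.exp (β * x) := by
    have h := Real.add_one_le_exp (β * x - 1)
    have h2 : Real.exp (β * x - 1) = Real.exp (β * x) / Real.exp 1 := Real.exp_sub _ _
    rw [h2] at h
    have := mul_le_mul_of_nonneg_left h he1.le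
    rw [mul_div_cancel₀ _ (ne_of_gt he1)] at this
    nlinarith
  rw [Real.exp_neg, mul_comm x, inv_mul_eq_div, div_le_div_iff₀ (Real.exp_pos _) (by positivity)]
  nlinarith


/-- The periodic sterile male population resulting from periodic impulsive releases. -/
noncomputable def MSper (μS τ Λ t : ℝ) : ℝ :=
  τ * Λ * Real.exp (-(μS * (t - (⌊t / τ⌋ : ℝ) * τ))) / (1 - Real.exp (-(μS * τ)))

lemma hE {μS τ : ℝ} (hμS : 0 < μS) (hτ : 0 < τ) : 0 < 1 - Real.exp (-(μS * τ)) := by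
  have : Real.exp (-(μS * τ)) < 1 := Real.exp_lt_one_iff.mpr (by nlinarith)
  linarith

lemma frac_lb {τ : ℝ} (hτ : 0 < τ) (t : ℝ) : 0 ≤ t - (⌊t / τ⌋ : ℝ) * τ := by
  have := Int.floor_le (t / τ)
  have h := mul_le_mul_of_nonneg_right this hτ.le
  rw [div_mul_cancel₀ _ (ne_of_gt hτ)] at h
  linarith

lemma frac_ub {τ : ℝ} (hτ : 0 < τ) (t : ℝ) : t - (⌊t / τ⌋ : ℝ) * τ < τ := by
  have := Int.lt_floor_add_one (t / τ)
  have h := mul_lt_mul_of_pos_right this hτ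
  rw [div_mul_cancel₀ _ (ne_of_gt hτ)] at h
  nlinarith

lemma msper_lb {μS τ Λ : ℝ} (hμS : 0 < μS) (hτ : 0 < τ) (hΛ : 0 < Λ) (t : ℝ) :
    τ * Λ * Real.exp (-(μS * τ)) / (1 - Real.exp (-(μS * τ))) ≤ MSper μS τ Λ t := by
  unfold MSper
  have hEp := hE hμS hτ
  gcongr
  exact (frac_ub hτ t).le

lemma msper_pos {μS τ Λ : ℝ} (hμS : 0 < μS) (hτ : 0 < τ) (hΛ : 0 < Λ) (t : ℝ) :
    0 < MSper μS τ Λ t :=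
  lt_of_lt_of_le (div_pos (by positivity) (hE hμS hτ)) (msper_lb hμS hτ hΛ t)

lemma msper_inv_ub {μS τ Λ : ℝ} (hμS : 0 < μS) (hτ : 0 < τ) (hΛ : 0 < Λ) (t : ℝ) :
    1 / MSper μS τ Λ t ≤ (1 - Real.exp (-(μS * τ))) / (τ * Λ * Real.exp (-(μS * τ))) := by
  have hlb := msper_lb hμS hτ hΛ t
  have hEp := hE hμS hτ
  have hMp := msper_pos hμS hτ hΛ t
  rw [div_le_div_iff₀ hMp (by positivity)]
  have h2 : τ * Λ * Real.exp (-(μS * τ)) ≤ (1 - Real.exp (-(μS * τ))) * MSper μS τ Λ t := by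
    calc τ * Λ * Real.exp (-(μS * τ))
        = (τ * Λ * Real.exp (-(μS * τ)) / (1 - Real.exp (-(μS * τ)))) * (1 - Real.exp (-(μS * τ))) := by
          rw [div_mul_cancel₀ _ (ne_of_gt hEp)]
      _ ≤ MSper μS τ Λ t * (1 - Real.exp (-(μS * τ))) := by gcongr
      _ = (1 - Real.exp (-(μS * τ))) * MSper μS τ Λ t := by ring
  linarith

lemma msper_periodic {μS τ Λ : ℝ} (hτ : 0 < τ) : Function.Periodic (MSper μS τ Λ) τ := by
  intro t
  unfold MSper
  have h : (t + τ) / τ = t / τ + 1 := by field_simp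
  rw [h, Int.floor_add_one]
  push_cast
  ring_nf

lemma msper_meas {μS τ Λ : ℝ} : Measurable (MSper μS τ Λ) := by
  unfold MSper
  apply Measurable.div_const
  apply Measurable.const_mul
  apply Real.measurable_exp.comp
  apply Measurable.neg
  apply Measurable.const_mul
  apply Measurable.sub measurable_id
  exact (measurable_from_top.comp ((measurable_id.div_const τ).floor)).mul_const τ

lemma msper_contAt {μS τ Λ : ℝ} (hτ : 0 < τ) {n : ℤ} {t : ℝ}
    (ht : (n : ℝ) * τ < t) (ht' : t < ((n : ℝ) + 1) * τ) :
    ContinuousAt (MSper μS τ Λ) t := by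
  have hev : ∀ s ∈ Set.Ioo ((n:ℝ) * τ) (((n:ℝ)+1) * τ),
      MSper μS τ Λ s = τ * Λ * Real.exp (-(μS * (s - n * τ))) / (1 - Real.exp (-(μS * τ))) := by
    intro s hs
    have hfl : ⌊s / τ⌋ = n := by
      rw [Int.floor_eq_iff]
      constructor
      · rw [le_div_iff₀ hτ]; exact (le_of_lt hs.1)
      · rw [div_lt_iff₀ hτ]; push_cast; exact hs.2
    unfold MSper
    rw [hfl]
  have hc : ContinuousAt (fun s => τ * Λ * Real.exp (-(μS * (s - n * τ))) / (1 - Real.exp (-(μS * τ)))) t := by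
    fun_prop
  exact hc.congr (Filter.eventuallyEq_of_mem (Ioo_mem_nhds ht ht') (fun s hs => (hev s hs).symm))

/-- bound on the birth term -/
lemma prod_bound {β γ m f S : ℝ} (hβ : 0 < β) (hγ : 0 < γ) (hm : 0 ≤ m) (hf : 0 ≤ f)
    (hS : 0 < S) :
    f * m / (m + γ * S) * Real.exp (-(β * (m + f))) ≤ f / (Real.exp 1 * β * γ) / S := by
  have hd : 0 < m + γ * S := by positivity
  have h1 : Real.exp (-(β * (m + f))) = Real.exp (-(β * m)) * Real.exp (-(β * f)) := by
    rw [← Real.exp_add]; congr 1; ring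
  have h2 : m * Real.exp (-(β * m)) ≤ 1 / (Real.exp 1 * β) := aux_xexp hβ hm
  have h3 : Real.exp (-(β * f)) ≤ 1 := Real.exp_le_one_iff.mpr (by nlinarith)
  have he1 : (0:ℝ) < Real.exp 1 := Real.exp_pos _
  calc f * m / (m + γ * S) * Real.exp (-(β * (m + f)))
      = (f / (m + γ * S)) * (m * Real.exp (-(β * m))) * Real.exp (-(β * f)) := by
        rw [h1]; ring
    _ ≤ (f / (m + γ * S)) * (1 / (Real.exp 1 * β)) * 1 := by
        apply mul_le_mul _ h3 (Real.exp_pos _).le (by positivity)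
        exact mul_le_mul_of_nonneg_left h2 (by positivity)
    _ = (f / (m + γ * S)) * (1 / (Real.exp 1 * β)) := by ring
    _ ≤ (f / (γ * S)) * (1 / (Real.exp 1 * β)) := by
        apply mul_le_mul_of_nonneg_right _ (by positivity)
        apply div_le_div_of_nonneg_left hf (by positivity)
        nlinarith
    _ = f / (Real.exp 1 * β * γ) / S := by
        rw [div_div, div_mul_div_comm, mul_one]
        congr 1
        ring

/-- Grönwall inequality -/
lemma gronwall {a F : ℝ → ℝ} (hameas : Measurable a)
    (haint : ∀ v w : ℝ, IntervalIntegrable a MeasureTheory.volume v w)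
    {s u : ℝ} (hsu : s ≤ u)
    (hacont : ∀ t ∈ Set.Ioo s u, ContinuousAt a t)
    (hF : ∀ t ∈ Set.Icc s u, ∃ f', HasDerivAt F f' t ∧ f' ≤ a t * F t) :
    F u ≤ F s * Real.exp (∫ x in s..u, a x) := by
  set A : ℝ → ℝ := fun t => ∫ x in s..t, a x with hA
  have hAc : Continuous A := intervalIntegral.continuous_primitive (fun v w => haint v w) s
  set g : ℝ → ℝ := fun t => F t * Real.exp (-A t) with hg
  have hanti : AntitoneOn g (Set.Icc s u) := by
    apply antitoneOn_of_deriv_nonpos (convex_Icc s u)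
    · apply ContinuousOn.mul
      · intro t ht
        exact ((hF t ht).choose_spec.1.continuousAt).continuousWithinAt
      · exact (Real.continuous_exp.comp hAc.neg).continuousOn
    · rw [interior_Icc]
      intro t ht
      obtain ⟨f', hf', _⟩ := hF t (Set.mem_Icc_of_Ioo ht)
      have hAd : HasDerivAt A (a t) t :=
        intervalIntegral.integral_hasDerivAt_right (haint s t)
          hameas.aestronglyMeasurable.stronglyMeasurableAtFilter (hacont t ht)
      exact ((hf'.mul ((hAd.neg).exp)).differentiableAt).differentiableWithinAt
    · rw [interior_Icc]
      intro t ht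
      obtain ⟨f', hf', hle⟩ := hF t (Set.mem_Icc_of_Ioo ht)
      have hAd : HasDerivAt A (a t) t :=
        intervalIntegral.integral_hasDerivAt_right (haint s t)
          hameas.aestronglyMeasurable.stronglyMeasurableAtFilter (hacont t ht)
      have hgd : HasDerivAt g (f' * Real.exp (-A t) + F t * (Real.exp (-A t) * -a t)) t :=
        hf'.mul ((hAd.neg).exp)
      rw [hgd.deriv]
      have : f' * Real.exp (-A t) + F t * (Real.exp (-A t) * -a t)
          = (f' - a t * F t) * Real.exp (-A t) := by ring
      rw [this]
      apply mul_nonpos_of_nonpos_of_nonneg (by linarith) (Real.exp_pos _).le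
  have h := hanti (Set.left_mem_Icc.mpr hsu) (Set.right_mem_Icc.mpr hsu) hsu
  have hgs : g s = F s := by
    simp [hg, hA, intervalIntegral.integral_same]
  have hgu : g u = F u * Real.exp (-A u) := rfl
  rw [hgs, hgu] at h
  have := mul_le_mul_of_nonneg_right h (Real.exp_pos (A u)).le
  rw [mul_assoc, ← Real.exp_add, neg_add_cancel, Real.exp_zero, mul_one] at this
  exact this

/-- bounded measurable functions are interval integrable -/
lemma bdd_intervalIntegrable {f : ℝ → ℝ} (hmeas : Measurable f) {C : ℝ}
    (hbd : ∀ x, |f x| ≤ C) (v w : ℝ) :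
    IntervalIntegrable f MeasureTheory.volume v w := by
  rw [intervalIntegrable_iff]
  apply MeasureTheory.Measure.integrableOn_of_bounded (M := C)
  · exact ne_of_lt measure_Ioc_lt_top
  · exact hmeas.aestronglyMeasurable
  · exact MeasureTheory.ae_of_all _ (fun x => by rw [Real.norm_eq_abs]; exact hbd x)

set_option maxHeartbeats 1000000 in
theorem stmt_10 (r ρ β μM μF μS γ τ Λ : ℝ)
    (hr0 : 0 < r) (hr1 : r < 1) (hρ : 0 < ρ) (hβ : 0 < β)
    (hμM : 0 < μM) (hμF : 0 < μF) (hμS : 0 < μS) (hγ : 0 < γ)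
    (hμ : μF ≤ μM) (hτ : 0 < τ) (hΛ : 0 < Λ)
    (hmean : (1 / τ) * ∫ t in (0:ℝ)..τ, 1 / MSper μS τ Λ t <
      Real.exp 1 * β * γ / ((1 - r) * ρ / μF))
    (M F : ℝ → ℝ)
    (hMnn : ∀ t, 0 ≤ t → 0 ≤ M t) (hFnn : ∀ t, 0 ≤ t → 0 ≤ F t)
    (hdM : ∀ t, 0 ≤ t →
      HasDerivAt M (r * ρ * (F t * M t / (M t + γ * MSper μS τ Λ t)) *
        Real.exp (-(β * (M t + F t))) - μM * M t) t)
    (hdF : ∀ t, 0 ≤ t →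
      HasDerivAt F ((1 - r) * ρ * (F t * M t / (M t + γ * MSper μS τ Λ t)) *
        Real.exp (-(β * (M t + F t))) - μF * F t) t) :
    (∀ n : ℕ, F (((n : ℝ) + 1) * τ) ≤
      Real.exp (((1 - r) * ρ / (Real.exp 1 * β * γ) *
        ((1 / τ) * ∫ t in (0:ℝ)..τ, 1 / MSper μS τ Λ t) - μF) * τ) * F ((n : ℝ) * τ)) ∧
    Filter.Tendsto M Filter.atTop (nhds 0) ∧ Filter.Tendsto F Filter.atTop (nhds 0) := by
  have he1 : (0:ℝ) < Real.exp 1 := Real.exp_pos 1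
  have h1r : 0 < 1 - r := by linarith
  set I : ℝ := ∫ t in (0:ℝ)..τ, 1 / MSper μS τ Λ t with hI
  set c : ℝ := (1 - r) * ρ / (Real.exp 1 * β * γ) with hc
  have hc0 : 0 < c := div_pos (mul_pos h1r hρ) (by positivity)
  set B : ℝ := (1 - Real.exp (-(μS * τ))) / (τ * Λ * Real.exp (-(μS * τ))) with hB
  have hB0 : 0 < B := div_pos (hE hμS hτ) (by positivity)
  set a : ℝ → ℝ := fun t => c / MSper μS τ Λ t - μF with ha
  have hSpos : ∀ t, 0 < MSper μS τ Λ t := msper_pos hμS hτ hΛ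
  have hSinv : ∀ t, 1 / MSper μS τ Λ t ≤ B := msper_inv_ub hμS hτ hΛ
  have hcS : ∀ t, c / MSper μS τ Λ t ≤ c * B := by
    intro t
    calc c / MSper μS τ Λ t = c * (1 / MSper μS τ Λ t) := by rw [mul_one_div]
      _ ≤ c * B := mul_le_mul_of_nonneg_left (hSinv t) hc0.le
  have hameas : Measurable a := (measurable_const.div msper_meas).sub measurable_const
  have hcB0 : 0 < c * B := mul_pos hc0 hB0
  have habd : ∀ t, |a t| ≤ c * B + μF := by
    intro t
    rw [abs_le]
    have h1 : 0 ≤ c / MSper μS τ Λ t := le_of_lt (div_pos hc0 (hSpos t))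
    have h2 := hcS t
    constructor
    · simp only [ha]; linarith
    · simp only [ha]; linarith
  have haint := bdd_intervalIntegrable hameas habd
  have hacontAt : ∀ (n : ℤ) (t : ℝ), (n:ℝ)*τ < t → t < ((n:ℝ)+1)*τ → ContinuousAt a t := by
    intro n t h1 h2
    have hms := msper_contAt (μS := μS) (Λ := Λ) hτ h1 h2
    exact (continuousAt_const.div hms (ne_of_gt (hSpos t))).sub continuousAt_const
  -- derivative inequality for F
  have hFle : ∀ t, 0 ≤ t →
      (1 - r) * ρ * (F t * M t / (M t + γ * MSper μS τ Λ t)) *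
        Real.exp (-(β * (M t + F t))) - μF * F t ≤ a t * F t := by
    intro t ht
    have hpb := prod_bound hβ hγ (hMnn t ht) (hFnn t ht) (hSpos t)
    have h4 := mul_le_mul_of_nonneg_left hpb (le_of_lt (mul_pos h1r hρ))
    have h5 : (1 - r) * ρ * (F t / (Real.exp 1 * β * γ) / MSper μS τ Λ t)
        = c / MSper μS τ Λ t * F t := by
      rw [hc]; field_simp
    have h6 : a t * F t = c / MSper μS τ Λ t * F t - μF * F t := by
      simp only [ha]; ring
    rw [h6, ← h5]
    have h7 : (1 - r) * ρ * (F t * M t / (M t + γ * MSper μS τ Λ t)) *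
        Real.exp (-(β * (M t + F t)))
        = (1 - r) * ρ * (F t * M t / (M t + γ * MSper μS τ Λ t) *
          Real.exp (-(β * (M t + F t)))) := by ring
    rw [h7]
    linarith
  -- Gronwall application
  have hgron : ∀ (n : ℤ), 0 ≤ n → ∀ t, (n:ℝ)*τ ≤ t → t ≤ ((n:ℝ)+1)*τ →
      F t ≤ F ((n:ℝ)*τ) * Real.exp (∫ x in ((n:ℝ)*τ)..t, a x) := by
    intro n hn t h1 h2
    have hn0 : (0:ℝ) ≤ (n:ℝ)*τ := mul_nonneg (by exact_mod_cast hn) hτ.le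
    apply gronwall hameas haint h1
    · intro x hx
      exact hacontAt n x hx.1 (lt_of_lt_of_le hx.2 h2)
    · intro x hx
      have hx0 : 0 ≤ x := le_trans hn0 hx.1
      exact ⟨_, hdF x hx0, hFle x hx0⟩
  -- integral of a over a period
  have haper : Function.Periodic a τ := by
    intro t
    simp only [ha]
    rw [msper_periodic hτ t]
  have hSint : ∀ v w : ℝ, IntervalIntegrable (fun t => 1 / MSper μS τ Λ t)
      MeasureTheory.volume v w := by
    apply bdd_intervalIntegrable (measurable_const.div msper_meas) (C := B)
    intro t
    show |1 / MSper μS τ Λ t| ≤ B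
    rw [abs_of_nonneg (le_of_lt (div_pos one_pos (hSpos t)))]
    exact hSinv t
  have hIa : ∫ x in (0:ℝ)..τ, a x = c * I - μF * τ := by
    have hfun : ∀ x, a x = c * (1 / MSper μS τ Λ x) - μF := by
      intro x; simp only [ha]; rw [mul_one_div]
    calc ∫ x in (0:ℝ)..τ, a x
        = ∫ x in (0:ℝ)..τ, (c * (1 / MSper μS τ Λ x) - μF) := by
          apply intervalIntegral.integral_congr
          intro x _; exact hfun x
      _ = (∫ x in (0:ℝ)..τ, c * (1 / MSper μS τ Λ x)) - ∫ x in (0:ℝ)..τ, (μF:ℝ) := by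
          apply intervalIntegral.integral_sub ((hSint 0 τ).const_mul c) intervalIntegrable_const
      _ = c * I - μF * τ := by
          rw [intervalIntegral.integral_const_mul, intervalIntegral.integral_const]
          rw [hI]
          simp [smul_eq_mul]
          ring
  have hIan : ∀ n : ℕ, ∫ x in ((n:ℝ)*τ)..(((n:ℝ)+1)*τ), a x = c * I - μF * τ := by
    intro n
    have hper := haper.intervalIntegral_add_eq ((n:ℝ)*τ) 0
    rw [zero_add] at hper
    have heq : ((n:ℝ)+1)*τ = (n:ℝ)*τ + τ := by ring
    rw [heq, hper, hIa]
  have hexp_eq : (c * ((1/τ) * I) - μF) * τ = c * I - μF * τ := by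
    field_simp
  -- part 1
  have part1 : ∀ n : ℕ, F (((n:ℝ)+1)*τ) ≤
      Real.exp ((c * ((1/τ)*I) - μF)*τ) * F ((n:ℝ)*τ) := by
    intro n
    have h := hgron (n:ℤ) (Int.ofNat_nonneg n) ((((n:ℤ):ℝ))*τ + τ) (by nlinarith) (by push_cast; nlinarith)
    push_cast at h
    have harg : (n:ℝ)*τ + τ = ((n:ℝ)+1)*τ := by ring
    rw [harg] at h
    rw [hIan n] at h
    rw [hexp_eq]
    exact h.trans_eq (mul_comm _ _)
  -- negativity of the exponent
  have hmuFc : Real.exp 1 * β * γ / ((1 - r) * ρ / μF) = μF / c := by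
    rw [hc]; field_simp
  have hcI : c * I - μF * τ < 0 := by
    rw [hmuFc] at hmean
    have h := mul_lt_mul_of_pos_left hmean (mul_pos hc0 hτ)
    have e1 : c * τ * (1 / τ * I) = c * I := by field_simp
    have e2 : c * τ * (μF / c) = μF * τ := by field_simp
    rw [e1, e2] at h
    linarith
  set lam : ℝ := μF * τ - c * I with hlam
  have hlam0 : 0 < lam := by simp only [hlam]; linarith
  have hF0 : 0 ≤ F 0 := hFnn 0 le_rfl
  -- grid decay
  have hq : (c * ((1/τ)*I) - μF)*τ = -lam := by rw [hexp_eq, hlam]; ring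
  have hgrid : ∀ n : ℕ, F ((n:ℝ)*τ) ≤ Real.exp (-(lam * n)) * F 0 := by
    intro n
    induction n with
    | zero => simp
    | succ k ih =>
      have h := part1 k
      rw [hq] at h
      calc F (((k:ℕ)+1:ℕ)*τ) = F (((k:ℝ)+1)*τ) := by push_cast; ring_nf
        _ ≤ Real.exp (-lam) * F ((k:ℝ)*τ) := h
        _ ≤ Real.exp (-lam) * (Real.exp (-(lam*k)) * F 0) :=
            mul_le_mul_of_nonneg_left ih (Real.exp_pos _).le
        _ = Real.exp (-(lam*((k:ℝ)+1))) * F 0 := by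
            rw [← mul_assoc, ← Real.exp_add]; congr 2; ring
        _ = Real.exp (-(lam*((k+1:ℕ):ℝ))) * F 0 := by push_cast; ring_nf
  set alp : ℝ := lam / τ with halp
  have halp0 : 0 < alp := div_pos hlam0 hτ
  set K : ℝ := Real.exp (c*B*τ + lam) * F 0 with hK
  have hK0 : 0 ≤ K := mul_nonneg (Real.exp_pos _).le hF0
  have hFdec : ∀ t, 0 ≤ t → F t ≤ K * Real.exp (-(alp*t)) := by
    intro t ht
    set n : ℤ := ⌊t/τ⌋ with hn
    have hn0 : 0 ≤ n := Int.floor_nonneg.mpr (by positivity)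
    have h1 : (n:ℝ)*τ ≤ t := by have := frac_lb hτ t; rw [hn]; linarith
    have h2 : t ≤ ((n:ℝ)+1)*τ := by have := frac_ub hτ t; rw [hn]; nlinarith
    have hnτ0 : (0:ℝ) ≤ (n:ℝ)*τ := mul_nonneg (by exact_mod_cast hn0) hτ.le
    have hg := hgron n hn0 t h1 h2
    have hint_le : ∫ x in ((n:ℝ)*τ)..t, a x ≤ c*B*τ := by
      have hmono : ∫ x in ((n:ℝ)*τ)..t, a x ≤ ∫ _x in ((n:ℝ)*τ)..t, (c*B) := by
        apply intervalIntegral.integral_mono_on h1 (haint _ _) intervalIntegrable_const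
        intro x _
        simp only [ha]
        linarith [hcS x]
      rw [intervalIntegral.integral_const, smul_eq_mul] at hmono
      nlinarith
    have hgridn : F ((n:ℝ)*τ) ≤ Real.exp (-(lam * n)) * F 0 := by
      have h := hgrid n.toNat
      have hcast : ((n.toNat : ℕ) : ℝ) = (n:ℝ) := by
        exact_mod_cast congrArg (Int.cast : ℤ → ℝ) (Int.toNat_of_nonneg hn0)
      rw [hcast] at h
      exact h
    have hFnτ : 0 ≤ F ((n:ℝ)*τ) := hFnn _ hnτ0
    have hexple : Real.exp (c*B*τ + -(lam*n)) ≤ Real.exp (c*B*τ + lam + -(alp*t)) := by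
      apply Real.exp_le_exp.mpr
      have halpt : alp * t ≤ lam * ((n:ℝ)+1) := by
        have := mul_le_mul_of_nonneg_left h2 (div_pos hlam0 hτ).le
        calc alp * t ≤ (lam/τ) * (((n:ℝ)+1)*τ) := by rw [halp]; exact this
          _ = lam * ((n:ℝ)+1) := by field_simp
      linarith
    calc F t ≤ F ((n:ℝ)*τ) * Real.exp (∫ x in ((n:ℝ)*τ)..t, a x) := hg
      _ ≤ F ((n:ℝ)*τ) * Real.exp (c*B*τ) :=
          mul_le_mul_of_nonneg_left (Real.exp_le_exp.mpr hint_le) hFnτ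
      _ ≤ (Real.exp (-(lam*n)) * F 0) * Real.exp (c*B*τ) :=
          mul_le_mul_of_nonneg_right hgridn (Real.exp_pos _).le
      _ = Real.exp (c*B*τ + -(lam*n)) * F 0 := by
          rw [show (Real.exp (-(lam*(n:ℝ))) * F 0) * Real.exp (c*B*τ)
            = (Real.exp (c*B*τ) * Real.exp (-(lam*(n:ℝ)))) * F 0 from by ring, ← Real.exp_add]
      _ ≤ Real.exp (c*B*τ + lam + -(alp*t)) * F 0 :=
          mul_le_mul_of_nonneg_right hexple hF0
      _ = K * Real.exp (-(alp*t)) := by rw [hK, Real.exp_add (c*B*τ+lam)]; ring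
  -- Tendsto F
  have hexp_decay : ∀ b : ℝ, 0 < b → Filter.Tendsto (fun t : ℝ => Real.exp (-(b*t)))
      Filter.atTop (nhds 0) := by
    intro b hb
    have h1 : Filter.Tendsto (fun t : ℝ => -(b*t)) Filter.atTop Filter.atBot := by
      apply Filter.tendsto_neg_atBot_iff.mpr
      exact Filter.Tendsto.const_mul_atTop hb Filter.tendsto_id
    exact Real.tendsto_exp_atBot.comp h1
  have htendF : Filter.Tendsto F Filter.atTop (nhds 0) := by
    apply tendsto_of_tendsto_of_tendsto_of_le_of_le' tendsto_const_nhds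
      (((hexp_decay alp halp0).const_mul K).congr' (by rfl) |>.mono_right (by rw [mul_zero]))
    · exact Filter.eventually_atTop.mpr ⟨0, fun t ht => hFnn t ht⟩
    · exact Filter.eventually_atTop.mpr ⟨0, fun t ht => hFdec t ht⟩
  -- M part
  set c2 : ℝ := r * ρ / (Real.exp 1 * β * γ) with hc2
  have hc20 : 0 < c2 := div_pos (mul_pos hr0 hρ) (by positivity)
  set alp' : ℝ := min alp (μM/2) with halp'
  have halp'0 : 0 < alp' := lt_min halp0 (by positivity)
  have halp'μ : alp' < μM := lt_of_le_of_lt (min_le_right _ _) (by linarith)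
  have halp'a : alp' ≤ alp := min_le_left _ _
  have hFdec' : ∀ t, 0 ≤ t → F t ≤ K * Real.exp (-(alp'*t)) := by
    intro t ht
    refine (hFdec t ht).trans (mul_le_mul_of_nonneg_left (Real.exp_le_exp.mpr ?_) hK0)
    nlinarith
  set D : ℝ := μM - alp' with hD
  have hD0 : 0 < D := by simp only [hD]; linarith
  set C : ℝ := c2*B*K/D with hC
  have hC0 : 0 ≤ C := by positivity
  set Pf : ℝ → ℝ := fun t => r * ρ * (F t * M t / (M t + γ * MSper μS τ Λ t)) *
    Real.exp (-(β * (M t + F t))) with hPf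
  have hP' : ∀ s, 0 ≤ s → HasDerivAt M (Pf s - μM * M s) s := fun s hs => hdM s hs
  have hPle : ∀ t, 0 ≤ t → Pf t ≤ c2*B*K*Real.exp (-(alp'*t)) := by
    intro t ht
    have hpb := prod_bound hβ hγ (hMnn t ht) (hFnn t ht) (hSpos t)
    have h4 := mul_le_mul_of_nonneg_left hpb (mul_pos hr0 hρ).le
    have h5 : r * ρ * (F t / (Real.exp 1 * β * γ) / MSper μS τ Λ t)
        = c2 * F t * (1 / MSper μS τ Λ t) := by rw [hc2]; field_simp
    calc Pf t
        = r*ρ*((F t*M t/(M t+γ*MSper μS τ Λ t))*Real.exp (-(β*(M t+F t)))) := by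
          rw [hPf]; ring
      _ ≤ r * ρ * (F t / (Real.exp 1 * β * γ) / MSper μS τ Λ t) := h4
      _ = c2 * F t * (1 / MSper μS τ Λ t) := h5
      _ ≤ c2 * F t * B := mul_le_mul_of_nonneg_left (hSinv t)
          (mul_nonneg hc20.le (hFnn t ht))
      _ = c2 * B * F t := by ring
      _ ≤ c2 * B * (K * Real.exp (-(alp'*t))) :=
          mul_le_mul_of_nonneg_left (hFdec' t ht) (mul_nonneg hc20.le hB0.le)
      _ = c2*B*K*Real.exp (-(alp'*t)) := by ring
  set H : ℝ → ℝ := fun s => M s * Real.exp (μM*s) - C * Real.exp (D*s) with hH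
  have hHd : ∀ s, 0 ≤ s → HasDerivAt H
      ((Pf s - μM*M s) * Real.exp (μM*s) + M s * (Real.exp (μM*s) * μM)
        - C * (Real.exp (D*s) * D)) s := by
    intro s hs
    have h1 : HasDerivAt (fun s : ℝ => Real.exp (μM*s)) (Real.exp (μM*s) * μM) s := by
      simpa using ((hasDerivAt_id s).const_mul μM).exp
    have h2 : HasDerivAt (fun s : ℝ => Real.exp (D*s)) (Real.exp (D*s) * D) s := by
      simpa using ((hasDerivAt_id s).const_mul D).exp
    exact ((hP' s hs).mul h1).sub (h2.const_mul C)
  have hCD : C * D = c2*B*K := by rw [hC]; field_simp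
  have hHanti : AntitoneOn H (Set.Ici 0) := by
    apply antitoneOn_of_deriv_nonpos (convex_Ici 0)
    · intro s hs
      exact ((hHd s hs).continuousAt).continuousWithinAt
    · rw [interior_Ici]
      intro s hs
      exact ((hHd s (le_of_lt hs)).differentiableAt).differentiableWithinAt
    · rw [interior_Ici]
      intro s hs
      have hs0 : (0:ℝ) ≤ s := le_of_lt hs
      rw [(hHd s hs0).deriv]
      have hP := hPle s hs0
      have hee : Real.exp (-(alp'*s)) * Real.exp (μM*s) = Real.exp (D*s) := by
        rw [← Real.exp_add]; congr 1; rw [hD]; ring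
      have h6 : Pf s * Real.exp (μM*s) ≤ c2*B*K*Real.exp (-(alp'*s)) * Real.exp (μM*s) :=
        mul_le_mul_of_nonneg_right hP (Real.exp_pos _).le
      have h7 : c2*B*K*Real.exp (-(alp'*s)) * Real.exp (μM*s) = c2*B*K*Real.exp (D*s) := by
        rw [mul_assoc, hee]
      have hrw : (Pf s - μM*M s) * Real.exp (μM*s) + M s * (Real.exp (μM*s) * μM)
          - C * (Real.exp (D*s) * D)
          = Pf s * Real.exp (μM*s) - c2*B*K*Real.exp (D*s) := by
        rw [← hCD]; ring
      rw [hrw]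
      rw [h7] at h6
      linarith
  have hMdec : ∀ t, 0 ≤ t → M t ≤ M 0 * Real.exp (-(μM*t)) + C * Real.exp (-(alp'*t)) := by
    intro t ht
    have h := hHanti Set.self_mem_Ici (Set.mem_Ici.mpr ht) ht
    have hH0 : H 0 = M 0 - C := by simp [hH]
    rw [hH0] at h
    have h2 : M t * Real.exp (μM*t) ≤ M 0 + C * Real.exp (D*t) := by
      simp only [hH] at h
      linarith
    have h3 := mul_le_mul_of_nonneg_right h2 (Real.exp_pos (-(μM*t))).le
    have e1 : M t * Real.exp (μM*t) * Real.exp (-(μM*t)) = M t := by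
      rw [mul_assoc, ← Real.exp_add]; simp
    have e2 : (M 0 + C * Real.exp (D*t)) * Real.exp (-(μM*t))
        = M 0 * Real.exp (-(μM*t)) + C * Real.exp (-(alp'*t)) := by
      rw [add_mul, mul_assoc, ← Real.exp_add]
      have hde : D*t + -(μM*t) = -(alp'*t) := by rw [hD]; ring
      rw [hde]
    rw [e1, e2] at h3
    exact h3
  have htendM : Filter.Tendsto M Filter.atTop (nhds 0) := by
    have hub : Filter.Tendsto (fun t => M 0 * Real.exp (-(μM*t)) + C * Real.exp (-(alp'*t)))
        Filter.atTop (nhds 0) := by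
      have h1 := ((hexp_decay μM hμM).const_mul (M 0)).add ((hexp_decay alp' halp'0).const_mul C)
      simpa using h1
    apply tendsto_of_tendsto_of_tendsto_of_le_of_le' tendsto_const_nhds hub
    · exact Filter.eventually_atTop.mpr ⟨0, fun t ht => hMnn t ht⟩
    · exact Filter.eventually_atTop.mpr ⟨0, fun t ht => hMdec t ht⟩
  exact ⟨part1, htendM, htendF⟩
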